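/- Let (A, n, src, dst, f) be an encoded st-DAG with flow, let u be a vertex with 0 < u < n−1 that has exactly one out-arc e (i.e., e is the unique arc with src e = u), let v = dst e, and suppose f e = Σ_{a : dst a = u} f a. Define the contracted instance on arc set A' = A \ {e}, same vertex count n, the same src, the flow f restricted to A', and dst' a = v if dst a = u and dst' a = dst a otherwise. Then for every k, (A, n, src, dst, f) admits a flow decomposition into k paths if and only if the contracted instance (A', n, src, dst', f|A') admits a flow decomposition into k paths. -/

import Mathlib

/-- An s–t path in an encoded st-DAG on vertex set `Fin n` (source `0`, sink `n-1`):
a nonempty list of arcs starting at the source, ending at the sink, and with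
consecutive arcs matching head-to-tail. -/
def IsSTPath {A : Type} {n : ℕ} (src dst : A → Fin n) (p : List A) : Prop :=
  p ≠ [] ∧ (∀ a, p.head? = some a → (src a : ℕ) = 0) ∧
    (∀ a, p.getLast? = some a → (dst a : ℕ) = n - 1) ∧
    List.Chain' (fun a b => dst a = src b) p

/-- A flow decomposition of the encoded st-DAG with flow `(A, n, src, dst, f)` into
`k` s–t paths `p` with positive integer weights `w`: every arc's flow value is the
sum of the weights of the paths containing it. -/
def IsFlowDecomp {A : Type} [Fintype A] [DecidableEq A] {n k : ℕ}
    (src dst : A → Fin n) (f : A → ℕ) (p : Fin k → List A) (w : Fin k → ℕ) : Prop :=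
  (∀ i, IsSTPath src dst (p i)) ∧ (∀ i, 1 ≤ w i) ∧
    ∀ a, f a = ∑ i, if a ∈ p i then w i else 0

set_option linter.unusedSectionVars false

section Helpers

variable {A : Type} [DecidableEq A] {n : ℕ} (src dst : A → Fin n) (u : Fin n) (e : A)

/-- Embed an `A`-list into the subtype list, dropping `e`. -/
def toB (l : List A) : List {a : A // a ≠ e} :=
  l.filterMap (fun a => if h : a = e then none else some ⟨a, h⟩)

lemma map_val_toB (l : List A) :
    (toB e l).map Subtype.val = l.filter (fun a => a ≠ e) := by
  induction l with
  | nil => rfl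
  | cons a l ih =>
    by_cases h : a = e <;> simp only [toB, List.filterMap_cons, List.filter_cons] at *
    · simp [h, ih]
    · simp [h, ih]

lemma mem_toB {a : A} (h : a ≠ e) (l : List A) :
    (⟨a, h⟩ : {a : A // a ≠ e}) ∈ toB e l ↔ a ∈ l := by
  rw [toB, List.mem_filterMap]
  constructor
  · rintro ⟨c, hc, hce⟩
    split at hce
    · simp at hce
    · rw [Option.some.injEq, Subtype.mk.injEq] at hce
      exact hce ▸ hc
  · intro ha; exact ⟨a, ha, by simp [h]⟩

/-- Expansion: insert `e` after each arc with head `u`. -/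
def expand (l : List A) : List A :=
  l.flatMap (fun a => if dst a = u then [a, e] else [a])

lemma mem_expand {b : A} (hb : b ≠ e) (l : List A) :
    b ∈ expand dst u e l ↔ b ∈ l := by
  induction l with
  | nil => simp [expand]
  | cons a l ih =>
    by_cases h : dst a = u <;>
      simp [expand, h, List.flatMap_cons, hb] at ih ⊢ <;> rw [ih]

lemma e_mem_expand (l : List A) (hl : e ∉ l) :
    e ∈ expand dst u e l ↔ ∃ a ∈ l, dst a = u := by
  rw [expand, List.mem_flatMap]
  constructor
  · rintro ⟨a, ha, hmem⟩
    refine ⟨a, ha, ?_⟩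
    by_contra hd
    simp only [hd, if_false, List.mem_singleton] at hmem
    exact hl (hmem ▸ ha)
  · rintro ⟨a, ha, hd⟩
    exact ⟨a, ha, by simp [hd]⟩

lemma head?_expand (l : List A) : (expand dst u e l).head? = l.head? := by
  cases l with
  | nil => rfl
  | cons a l =>
    by_cases h : dst a = u <;> simp [expand, List.flatMap_cons, h]

lemma getLast?_expand (l : List A) (b : A) (h : (expand dst u e l).getLast? = some b) :
    (b = e ∧ ∃ a, l.getLast? = some a ∧ dst a = u) ∨
      (l.getLast? = some b ∧ dst b ≠ u) := by
  induction l with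
  | nil => simp [expand] at h
  | cons a l ih =>
    cases l with
    | nil =>
      by_cases hd : dst a = u <;> simp only [expand, List.flatMap_cons, hd, if_true, if_false,
        List.flatMap_nil, List.append_nil] at h
      · left
        simp at h
        exact ⟨h.symm, a, rfl, hd⟩
      · simp at h
        right
        exact ⟨by simp [h], by rw [← h]; exact hd⟩
    | cons c l' =>
      have hne : expand dst u e (c :: l') ≠ [] := by
        by_cases hd : dst c = u <;> simp [expand, List.flatMap_cons, hd]
      have heq : expand dst u e (a :: c :: l') =
          (if dst a = u then [a, e] else [a]) ++ expand dst u e (c :: l') := by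
        simp [expand, List.flatMap_cons]
      rw [heq, List.getLast?_append_of_ne_nil _ hne] at h
      have := ih h
      simpa [List.getLast?_cons_cons] using this

end Helpers

section Chains

variable {A : Type} [DecidableEq A] {n : ℕ} (src dst : A → Fin n) (u : Fin n) (e : A)

lemma chain_expand (hsrce : src e = u) (l : List A)
    (hch : l.Chain' (fun a b => (if dst a = u then dst e else dst a) = src b)) :
    (expand dst u e l).Chain' (fun a b => dst a = src b) := by
  induction l with
  | nil => simp [expand]; exact List.IsChain.nil
  | cons a l ih =>
    simp only [List.Chain', List.isChain_cons] at hch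
    have heq : expand dst u e (a :: l) =
        (if dst a = u then [a, e] else [a]) ++ expand dst u e l := by
      simp [expand, List.flatMap_cons]
    rw [heq]
    apply List.IsChain.append
    · by_cases hd : dst a = u <;> simp [hd, hsrce]
    · exact ih hch.2
    · intro x hx y hy
      rw [head?_expand] at hy
      have hR' := hch.1 y hy
      by_cases hd : dst a = u
      · simp only [hd, if_true] at hx hR'
        have hx' : x = e := by simpa using hx.symm
        subst hx'
        exact hR'
      · simp only [hd, if_false] at hx hR'
        have hx' : x = a := by simpa using hx.symm
        subst hx'
        exact hR'

lemma chain_RtoR' (huniq : ∀ a, src a = u → a = e)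
    (l : List A) (hl : ∀ b ∈ l, b ≠ e)
    (hch : l.Chain' (fun a b => dst a = src b)) :
    l.Chain' (fun a b => (if dst a = u then dst e else dst a) = src b) := by
  induction l with
  | nil => exact List.IsChain.nil
  | cons a l ih =>
    simp only [List.Chain', List.isChain_cons] at hch ⊢
    refine ⟨?_, ih (fun b hb => hl b (List.mem_cons_of_mem _ hb)) hch.2⟩
    intro y hy
    have hR := hch.1 y hy
    by_cases hd : dst a = u
    · exfalso
      have h1 : src y = u := by rw [← hR, hd]
      exact hl y (List.mem_cons_of_mem _ (List.mem_of_mem_head? hy)) (huniq y h1)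
    · simpa [hd] using hR

lemma pairwise_src_lt (hacyc : ∀ a, src a < dst a)
    (l : List A) (hch : l.Chain' (fun a b => dst a = src b)) :
    l.Pairwise (fun a b => (src a : ℕ) < (src b : ℕ)) := by
  haveI : IsTrans A (fun a b => (src a : ℕ) < (src b : ℕ)) := ⟨fun _ _ _ => lt_trans⟩
  refine List.isChain_iff_pairwise.mp (hch.imp ?_)
  intro a b h
  have := hacyc a
  rw [Fin.lt_def, h] at this
  exact this

lemma nodup_of_chain (hacyc : ∀ a, src a < dst a)
    (l : List A) (hch : l.Chain' (fun a b => dst a = src b)) : l.Nodup := by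
  refine (pairwise_src_lt src dst hacyc l hch).imp ?_
  intro a b h hab
  subst hab
  exact lt_irrefl _ h

end Chains

section Paths

variable {A : Type} [DecidableEq A] {n : ℕ} (src dst : A → Fin n) (u : Fin n) (e : A)

/-- In a contracted chain, at most one arc has (original) head `u`. -/
lemma unique_head_u (hacyc : ∀ a, src a < dst a) (hsrce : src e = u)
    (l : List A)
    (hch : l.Chain' (fun a b => (if dst a = u then dst e else dst a) = src b)) :
    ∀ a ∈ l, ∀ b ∈ l, dst a = u → dst b = u → a = b := by
  have hue : (u : ℕ) < (dst e : ℕ) := by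
    have := hacyc e; rw [Fin.lt_def, hsrce] at this; exact this
  set T : A → A → Prop := fun a b =>
    (src a : ℕ) < (src b : ℕ) ∧ (dst a = u → (dst e : ℕ) ≤ (src b : ℕ)) with hT
  haveI : IsTrans A T := ⟨by
    rintro a b c ⟨h1, h2⟩ ⟨h3, h4⟩
    exact ⟨lt_trans h1 h3, fun hd => le_trans (le_of_lt (lt_of_le_of_lt (h2 hd) h3)) le_rfl⟩⟩
  have hpw : l.Pairwise T := by
    refine List.isChain_iff_pairwise.mp (hch.imp ?_)
    intro a b h
    by_cases hd : dst a = u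
    · rw [hd, if_pos rfl] at h
      constructor
      · calc (src a : ℕ) < (dst a : ℕ) := by
              have := hacyc a; rwa [Fin.lt_def] at this
          _ < (dst e : ℕ) := by rw [hd]; exact hue
          _ = (src b : ℕ) := by rw [h]
      · intro _; rw [h]
    · rw [if_neg hd] at h
      refine ⟨?_, fun h' => absurd h' hd⟩
      have := hacyc a; rw [Fin.lt_def, h] at this; exact this
  set S : A → A → Prop := fun a b => a = b ∨ ¬(dst a = u ∧ dst b = u) with hS
  have hpwS : l.Pairwise S := hpw.imp (by
    intro a b ⟨h1, h2⟩
    right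
    rintro ⟨hda, hdb⟩
    have := h2 hda
    have hb := hacyc b
    rw [Fin.lt_def, hdb] at hb
    omega)
  have hsym : Symmetric S := by
    intro a b h
    rcases h with h | h
    · left; exact h.symm
    · right; rintro ⟨h1, h2⟩; exact h ⟨h2, h1⟩
  intro a ha b hb hda hdb
  by_cases hab : a = b
  · exact hab
  · rcases (haveI : Std.Symm S := ⟨fun _ _ h => hsym h⟩; hpwS.forall ha hb hab) with h | h
    · exact h
    · exact absurd ⟨hda, hdb⟩ h

lemma contract_path
    (hu0 : 0 < (u : ℕ)) (hun : (u : ℕ) < n - 1)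
    (hacyc : ∀ a, src a < dst a) (hsrce : src e = u) (huniq : ∀ a, src a = u → a = e)
    (p : List A) (hp : IsSTPath src dst p) :
    IsSTPath (fun a : {a : A // a ≠ e} => src a.1)
      (fun a => if dst a.1 = u then dst e else dst a.1) (toB e p) := by
  obtain ⟨hne, hhead, hlast, hchain⟩ := hp
  set q : List A := (toB e p).map Subtype.val with hqdef
  have hq : q = p.filter (fun a => a ≠ e) := map_val_toB e p
  -- establish the four facts about q
  have key : q ≠ [] ∧ q.head? = p.head? ∧
      (∀ b, q.getLast? = some b →
        ((if dst b = u then dst e else dst b : Fin n) : ℕ) = n - 1) ∧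
      q.Chain' (fun a b => (if dst a = u then dst e else dst a) = src b) := by
    by_cases he : e ∈ p
    · -- split p at e
      obtain ⟨xs, ys, hsplit⟩ := List.append_of_mem he
      have hnd : p.Nodup := nodup_of_chain src dst hacyc p hchain
      rw [hsplit] at hnd
      have hexs : e ∉ xs := by
        have := (List.nodup_append'.mp hnd).2.2
        intro h; exact this h List.mem_cons_self
      have heys : e ∉ ys := by
        have := (List.nodup_append'.mp hnd).2.1
        exact (List.nodup_cons.mp this).1
      have h1 : xs.filter (fun a => decide (a ≠ e)) = xs := by
        apply List.filter_eq_self.mpr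
        intro a ha
        simp only [ne_eq, decide_eq_true_eq]
        intro h; exact hexs (by rw [← h]; exact ha)
      have h2 : ys.filter (fun a => decide (a ≠ e)) = ys := by
        apply List.filter_eq_self.mpr
        intro a ha
        simp only [ne_eq, decide_eq_true_eq]
        intro h; exact heys (by rw [← h]; exact ha)
      have hq2 : q = xs ++ ys := by
        rw [hq, hsplit, List.filter_append, List.filter_cons]
        simp only [ne_eq, decide_not] at h1 h2
        simp [h1, h2]
      rw [hsplit] at hchain
      simp only [List.Chain', List.isChain_append] at hchain
      obtain ⟨hcxs, hceys, hlink⟩ := hchain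
      rw [List.isChain_cons] at hceys
      obtain ⟨hlink2, hcys⟩ := hceys
      -- xs ≠ []
      have hxs_ne : xs ≠ [] := by
        intro h
        rw [h] at hsplit
        have : p.head? = some e := by rw [hsplit]; rfl
        have := hhead e this
        rw [hsrce] at this
        omega
      constructor
      · rw [hq2]; intro h
        exact hxs_ne (List.append_eq_nil_iff.mp h).1
      constructor
      · rw [hq2, hsplit]
        cases xs with
        | nil => exact absurd rfl hxs_ne
        | cons x xs' => rfl
      constructor
      · intro b hb
        cases ys with
        | nil =>
          -- q = xs, last of xs has dst = u; e is last of p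
          rw [hq2, List.append_nil] at hb
          have hdb : dst b = u := by
            have := hlink b (Option.mem_def.mpr hb) e rfl
            rw [this, hsrce]
          rw [if_pos hdb]
          apply hlast
          rw [hsplit]
          rw [List.getLast?_append_cons]
          rfl
        | cons c ys' =>
          have hlastq : p.getLast? = some b := by
            rw [hsplit, List.getLast?_append_cons]
            rw [hq2, List.getLast?_append_of_ne_nil _ (by simp)] at hb
            rw [List.getLast?_cons_cons]
            exact hb
          have hdb := hlast b hlastq
          have hdbu : dst b ≠ u := by
            intro h
            rw [h] at hdb
            omega
          rw [if_neg hdbu]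
          exact hdb
      · rw [hq2]
        simp only [List.Chain', List.isChain_append]
        refine ⟨chain_RtoR' src dst u e huniq xs
            (fun b hb h => hexs (by rw [← h]; exact hb)) hcxs,
          chain_RtoR' src dst u e huniq ys
            (fun b hb h => heys (by rw [← h]; exact hb)) hcys, ?_⟩
        intro x hx y hy
        have hdx : dst x = u := by
          have := hlink x hx e rfl
          rw [this, hsrce]
        rw [if_pos hdx]
        exact hlink2 y hy
    · -- e not in p
      have hq2 : q = p := by
        rw [hq, List.filter_eq_self.mpr]
        intro a ha
        simp only [ne_eq, decide_eq_true_eq]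
        intro h; exact he (by rw [← h]; exact ha)
      rw [hq2]
      refine ⟨hne, rfl, ?_, chain_RtoR' src dst u e huniq p
        (fun b hb h => he (by rw [← h]; exact hb)) hchain⟩
      intro b hb
      have hdb := hlast b hb
      have hdbu : dst b ≠ u := by intro h; rw [h] at hdb; omega
      rw [if_neg hdbu]
      exact hdb
  obtain ⟨k1, k2, k3, k4⟩ := key
  refine ⟨?_, ?_, ?_, ?_⟩
  · intro h; exact k1 (by rw [hqdef, h]; rfl)
  · intro a ha
    apply hhead
    rw [← k2, hqdef, List.head?_map, ha]
    rfl
  · intro a ha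
    have : q.getLast? = some a.1 := by
      rw [hqdef, List.getLast?_map, ha]; rfl
    exact k3 a.1 this
  · have := k4
    simp only [hqdef, List.Chain', List.isChain_map] at this
    exact this

lemma expand_path
    (hacyc : ∀ a, src a < dst a) (hsrce : src e = u)
    (q : List A) (hq : e ∉ q)
    (hne : q ≠ [])
    (hhead : ∀ a, q.head? = some a → (src a : ℕ) = 0)
    (hlast : ∀ a, q.getLast? = some a →
      ((if dst a = u then dst e else dst a : Fin n) : ℕ) = n - 1)
    (hchain : q.Chain' (fun a b => (if dst a = u then dst e else dst a) = src b)) :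
    IsSTPath src dst (expand dst u e q) := by
  refine ⟨?_, ?_, ?_, chain_expand src dst u e hsrce q hchain⟩
  · intro h
    have : (expand dst u e q).head? = none := by rw [h]; rfl
    rw [head?_expand] at this
    cases q with
    | nil => exact hne rfl
    | cons a l => simp at this
  · intro a ha
    rw [head?_expand] at ha
    exact hhead a ha
  · intro b hb
    rcases getLast?_expand dst u e q b hb with ⟨hbe, a, hqa, hda⟩ | ⟨hqb, hdb⟩
    · subst hbe
      have := hlast a hqa
      rw [if_pos hda] at this
      exact this
    · have := hlast b hqb
      rw [if_neg hdb] at this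
      exact this

end Paths


/-- Contracting the unique out-arc `e` of an internal vertex `u`
(whose flow value equals the total in-flow of `u`) preserves, for every `k`, the
existence of a flow decomposition into `k` paths.  The contracted instance lives on
the arc set `A \ {e}`, keeps `src` and `f`, and redirects every arc with head `u`
to `v = dst e`. -/
theorem contract_arc_iff {A : Type} [Fintype A] [DecidableEq A] {n : ℕ}
    (src dst : A → Fin n) (f : A → ℕ) (hn : 2 ≤ n)
    (hacyc : ∀ a, src a < dst a)
    (u : Fin n) (hu0 : 0 < (u : ℕ)) (hun : (u : ℕ) < n - 1)
    (e : A) (hsrce : src e = u) (huniq : ∀ a, src a = u → a = e)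
    (hflow : f e = ∑ a ∈ Finset.univ.filter (fun a => dst a = u), f a)
    (k : ℕ) :
    (∃ (p : Fin k → List A) (w : Fin k → ℕ), IsFlowDecomp src dst f p w) ↔
      (∃ (p : Fin k → List {a : A // a ≠ e}) (w : Fin k → ℕ),
        IsFlowDecomp (fun a => src a.val)
          (fun a => if dst a.val = u then dst e else dst a.val)
          (fun a => f a.val) p w) := by
  have hv : (u : ℕ) < (dst e : ℕ) := by
    have := hacyc e; rwa [Fin.lt_def, hsrce] at this
  have hveu : dst e ≠ u := fun h => by rw [h] at hv; omega
  constructor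
  · rintro ⟨p, w, hpaths, hw, hf⟩
    refine ⟨fun i => toB e (p i), w,
      fun i => contract_path src dst u e hu0 hun hacyc hsrce huniq (p i) (hpaths i), hw, ?_⟩
    rintro ⟨a, ha⟩
    show f a = _
    rw [show f a = ∑ i, if a ∈ p i then w i else 0 from hf a]
    refine Finset.sum_congr rfl fun i _ => ?_
    by_cases hm : a ∈ p i
    · rw [if_pos hm, if_pos ((mem_toB e ha (p i)).mpr hm)]
    · rw [if_neg hm, if_neg (fun hc => hm ((mem_toB e ha (p i)).mp hc))]
  · rintro ⟨pB, w, hpaths, hw, hf⟩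
    have hnoe : ∀ i, e ∉ (pB i).map Subtype.val := by
      intro i h
      obtain ⟨b, _, hb⟩ := List.mem_map.mp h
      exact b.2 hb
    have hfA : ∀ (a : A), a ≠ e →
        f a = ∑ i, if a ∈ (pB i).map Subtype.val then w i else 0 := by
      intro a ha
      rw [show f a = _ from
        hf ⟨a, ha⟩]
      refine Finset.sum_congr rfl fun i _ => ?_
      by_cases hm : (⟨a, ha⟩ : {a : A // a ≠ e}) ∈ pB i
      · rw [if_pos hm, if_pos (show a ∈ (pB i).map Subtype.val from List.mem_map.mpr ⟨⟨a, ha⟩, hm, rfl⟩)]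
      · rw [if_neg hm, if_neg ?_]
        intro hc
        obtain ⟨b, hb, hba⟩ := List.mem_map.mp hc
        have hba' : b = ⟨a, ha⟩ := Subtype.ext hba
        exact hm (hba' ▸ hb)
    have hqchain : ∀ i, ((pB i).map Subtype.val).Chain'
        (fun a b => (if dst a = u then dst e else dst a) = src b) :=
      fun i => (List.isChain_map _).mpr (hpaths i).2.2.2
    refine ⟨fun i => expand dst u e ((pB i).map Subtype.val), w, ?_, hw, ?_⟩
    · intro i
      obtain ⟨hne, hhead, hlast, hchain⟩ := hpaths i
      apply expand_path src dst u e hacyc hsrce _ (hnoe i)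
      · intro h
        exact hne (List.map_eq_nil_iff.mp h)
      · intro a ha
        rw [List.head?_map] at ha
        cases hh : (pB i).head? with
        | none => rw [hh] at ha; simp at ha
        | some b =>
          rw [hh] at ha
          simp only [Option.map_some] at ha
          obtain rfl : b.val = a := by injection ha
          exact hhead b hh
      · intro a ha
        rw [List.getLast?_map] at ha
        cases hh : (pB i).getLast? with
        | none => rw [hh] at ha; simp at ha
        | some b =>
          rw [hh] at ha
          simp only [Option.map_some] at ha
          obtain rfl : b.val = a := by injection ha
          exact hlast b hh
      · exact hqchain i
    · intro a
      by_cases hae : a = e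
      · rw [hae, hflow]
        have step1 : ∑ a ∈ Finset.univ.filter (fun a => dst a = u), f a =
            ∑ a ∈ Finset.univ.filter (fun a => dst a = u),
              ∑ i, if a ∈ (pB i).map Subtype.val then w i else 0 := by
          refine Finset.sum_congr rfl fun a ha => ?_
          have hau : dst a = u := (Finset.mem_filter.mp ha).2
          exact hfA a (fun h => hveu (by rw [← h]; exact hau))
        rw [step1, Finset.sum_comm]
        refine Finset.sum_congr rfl fun i _ => ?_
        by_cases hex : ∃ b ∈ (pB i).map Subtype.val, dst b = u
        · rw [if_pos ((e_mem_expand dst u e _ (hnoe i)).mpr hex)]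
          obtain ⟨a0, ha0q, ha0u⟩ := hex
          rw [Finset.sum_eq_single_of_mem a0
            (Finset.mem_filter.mpr ⟨Finset.mem_univ _, ha0u⟩)]
          · rw [if_pos ha0q]
          · intro b hb hba
            have hbu : dst b = u := (Finset.mem_filter.mp hb).2
            rw [if_neg]
            intro hbq
            exact hba (unique_head_u src dst u e hacyc hsrce _ (hqchain i)
              b hbq a0 ha0q hbu ha0u)
        · rw [if_neg (fun hc => hex ((e_mem_expand dst u e _ (hnoe i)).mp hc))]
          refine Finset.sum_eq_zero fun b hb => ?_
          rw [if_neg]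
          intro hbq
          exact hex ⟨b, hbq, (Finset.mem_filter.mp hb).2⟩
      · rw [hfA a hae]
        refine Finset.sum_congr rfl fun i _ => ?_
        by_cases hm : a ∈ (pB i).map Subtype.val
        · rw [if_pos hm, if_pos ((mem_expand dst u e hae _).mpr hm)]
        · rw [if_neg hm, if_neg (fun hc => hm ((mem_expand dst u e hae _).mp hc))]
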